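/- If (G₁, G₂) is a centered bivariate Gaussian vector with G₁ and G₂ not almost surely equal, then the random variable min(G₁, G₂) is not Gaussian. -/
import Mathlib

open MeasureTheory ProbabilityTheory Real

lemma gauss_shift (t m : ℝ) {v : NNReal} (hv : v ≠ 0) (x : ℝ) :
    gaussianPDFReal m v x * Real.exp (t * x)
      = Real.exp (t * m + v * t ^ 2 / 2) * gaussianPDFReal (m + t * v) v x := by
  have hv' : (0:ℝ) < v := by
    exact_mod_cast pos_iff_ne_zero.mpr hv
  unfold gaussianPDFReal
  rw [mul_right_comm, mul_assoc, ← Real.exp_add, mul_left_comm, ← Real.exp_add]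
  congr 1
  field_simp
  ring

lemma integral_exp_gaussianReal (t m : ℝ) (v : NNReal) :
    ∫ x, Real.exp (t * x) ∂(gaussianReal m v) = Real.exp (t * m + v * t ^ 2 / 2) := by
  by_cases hv : v = 0
  · subst hv
    rw [gaussianReal_zero_var, integral_dirac]
    simp
  · rw [gaussianReal_of_var_ne_zero _ hv]
    have hpdf : gaussianPDF m v = fun x => ((Real.toNNReal (gaussianPDFReal m v x) : NNReal) : ENNReal) := rfl
    rw [hpdf, integral_withDensity_eq_integral_smul
        ((measurable_gaussianPDFReal m v).real_toNNReal) _]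
    have : ∀ x, (Real.toNNReal (gaussianPDFReal m v x)) • Real.exp (t * x)
        = Real.exp (t * m + v * t ^ 2 / 2) * gaussianPDFReal (m + t * v) v x := by
      intro x
      rw [NNReal.smul_def, Real.coe_toNNReal _ (gaussianPDFReal_nonneg m v x)]
      exact gauss_shift t m hv x
    simp_rw [this]
    rw [integral_const_mul, integral_gaussianPDFReal_eq_one _ hv, mul_one]

lemma integrable_exp_gaussianReal (t m : ℝ) (v : NNReal) :
    Integrable (fun x => Real.exp (t * x)) (gaussianReal m v) := by
  by_cases hv : v = 0
  · subst hv
    rw [gaussianReal_zero_var]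
    refine ⟨(by fun_prop : Measurable fun x : ℝ => Real.exp (t * x)).aestronglyMeasurable, ?_⟩
    simp [HasFiniteIntegral, lintegral_dirac]
  · rw [gaussianReal_of_var_ne_zero _ hv]
    rw [integrable_withDensity_iff (measurable_gaussianPDF m v)
      (Filter.Eventually.of_forall fun x => ENNReal.ofReal_lt_top)]
    have : ∀ x, Real.exp (t * x) * (gaussianPDF m v x).toReal
        = Real.exp (t * m + v * t ^ 2 / 2) * gaussianPDFReal (m + t * v) v x := by
      intro x
      rw [gaussianPDF, ENNReal.toReal_ofReal (gaussianPDFReal_nonneg m v x), mul_comm]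
      exact gauss_shift t m hv x
    simp_rw [this]
    exact (integrable_gaussianPDFReal _ _).const_mul _

lemma mgf_of_map {Ω : Type*} [MeasurableSpace Ω] {P : Measure Ω} {X : Ω → ℝ}
    (hm : Measurable X) {m : ℝ} {v : NNReal}
    (h : Measure.map X P = gaussianReal m v) (t : ℝ) :
    Integrable (fun ω => Real.exp (t * X ω)) P ∧
      ∫ ω, Real.exp (t * X ω) ∂P = Real.exp (t * m + v * t ^ 2 / 2) := by
  have hc : AEStronglyMeasurable (fun x : ℝ => Real.exp (t * x)) (Measure.map X P) :=
    (by fun_prop : Measurable fun x : ℝ => Real.exp (t * x)).aestronglyMeasurable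
  constructor
  · have h2 := integrable_exp_gaussianReal t m v
    rw [← h] at h2
    exact (integrable_map_measure hc hm.aemeasurable).mp h2
  · rw [← integral_map hm.aemeasurable hc, h, integral_exp_gaussianReal]

lemma aux_le_zero {b K : ℝ} (h : ∀ t : ℝ, 0 < t → b * t ≤ K) : b ≤ 0 := by
  by_contra hb
  push_neg at hb
  have ht : 0 < (|K| + 1) / b := by positivity
  have h1 := h _ ht
  have h2 : b * ((|K| + 1) / b) = |K| + 1 := by field_simp
  have h3 := le_abs_self K
  linarith

lemma aux_quad {a b K : ℝ} (h : ∀ t : ℝ, 0 < t → a * t ^ 2 + b * t ≤ K) : a ≤ 0 := by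
  by_contra ha
  push_neg at ha
  set t := max 1 ((|b| + |K| + 1) / a) with ht
  have ht1 : (1:ℝ) ≤ t := le_max_left _ _
  have ht0 : (0:ℝ) < t := lt_of_lt_of_le one_pos ht1
  have hat : |b| + |K| + 1 ≤ a * t := by
    have h2 : (|b| + |K| + 1) / a ≤ t := le_max_right _ _
    calc |b| + |K| + 1 = a * ((|b| + |K| + 1) / a) := by field_simp
    _ ≤ a * t := by nlinarith
  have h1 := h t ht0
  have h3 : (|b| + |K| + 1) * t ≤ a * t * t := mul_le_mul_of_nonneg_right hat ht0.le
  have h4 : -|b| * t ≤ b * t := mul_le_mul_of_nonneg_right (neg_abs_le b) ht0.le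
  nlinarith [le_abs_self K, abs_nonneg b, abs_nonneg K]

/-- A centered bivariate Gaussian vector: every linear combination of the two
coordinates is a centered (possibly degenerate) Gaussian random variable. -/
theorem stmt4 {Ω : Type*} [MeasurableSpace Ω]
    (P : Measure Ω) [IsProbabilityMeasure P]
    (G₁ G₂ : Ω → ℝ) (hm1 : Measurable G₁) (hm2 : Measurable G₂)
    (hgauss : ∀ a b : ℝ, ∃ v : NNReal,
      Measure.map (fun ω => a * G₁ ω + b * G₂ ω) P = gaussianReal 0 v)
    (hne : P {ω | G₁ ω ≠ G₂ ω} ≠ 0) :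
    ¬ ∃ (μ : ℝ) (v : NNReal),
      Measure.map (fun ω => min (G₁ ω) (G₂ ω)) P = gaussianReal μ v := by
  rintro ⟨μ₀, v, hMv⟩
  set M : Ω → ℝ := fun ω => min (G₁ ω) (G₂ ω) with hMdef
  have hmM : Measurable M := hm1.min hm2
  obtain ⟨v₁, h1⟩ := hgauss 1 0
  obtain ⟨v₂, h2⟩ := hgauss 0 1
  obtain ⟨σ, hσmap⟩ := hgauss (-1) 1
  have e1 : (fun ω => (1:ℝ) * G₁ ω + 0 * G₂ ω) = G₁ := by funext ω; ring
  have e2 : (fun ω => (0:ℝ) * G₁ ω + 1 * G₂ ω) = G₂ := by funext ω; ring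
  have e3 : (fun ω => (-1:ℝ) * G₁ ω + 1 * G₂ ω) = fun ω => G₂ ω - G₁ ω := by funext ω; ring
  rw [e1] at h1; rw [e2] at h2; rw [e3] at hσmap
  have hM := fun t => mgf_of_map (P := P) hmM hMv t
  have hG1 := fun t => mgf_of_map (P := P) hm1 h1 t
  have hG2 := fun t => mgf_of_map (P := P) hm2 h2 t
  -- ∫ exp(-t G₁) ≤ ∫ exp(-t M) for t > 0 (and the same for G₂)
  have key1 : ∀ t : ℝ, 0 < t → (v₁:ℝ) * t ^ 2 / 2 ≤ -t * μ₀ + v * t ^ 2 / 2 := by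
    intro t ht
    have hpt : (fun ω => Real.exp (-t * G₁ ω)) ≤ fun ω => Real.exp (-t * M ω) := by
      intro ω
      apply Real.exp_le_exp.mpr
      have hle : M ω ≤ G₁ ω := min_le_left _ _
      nlinarith
    have hint := integral_mono (hG1 (-t)).1 (hM (-t)).1 hpt
    rw [(hG1 (-t)).2, (hM (-t)).2] at hint
    have := Real.exp_le_exp.mp hint
    ring_nf at this ⊢
    linarith
  have key2 : ∀ t : ℝ, 0 < t → (v₂:ℝ) * t ^ 2 / 2 ≤ -t * μ₀ + v * t ^ 2 / 2 := by
    intro t ht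
    have hpt : (fun ω => Real.exp (-t * G₂ ω)) ≤ fun ω => Real.exp (-t * M ω) := by
      intro ω
      apply Real.exp_le_exp.mpr
      have hle : M ω ≤ G₂ ω := min_le_right _ _
      nlinarith
    have hint := integral_mono (hG2 (-t)).1 (hM (-t)).1 hpt
    rw [(hG2 (-t)).2, (hM (-t)).2] at hint
    have := Real.exp_le_exp.mp hint
    ring_nf at this ⊢
    linarith
  -- ∫ exp(t M) ≤ ∫ exp(t Gᵢ) for t > 0
  have key3 : ∀ t : ℝ, 0 < t → t * μ₀ + v * t ^ 2 / 2 ≤ (v₁:ℝ) * t ^ 2 / 2 := by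
    intro t ht
    have hpt : (fun ω => Real.exp (t * M ω)) ≤ fun ω => Real.exp (t * G₁ ω) := by
      intro ω
      apply Real.exp_le_exp.mpr
      have hle : M ω ≤ G₁ ω := min_le_left _ _
      nlinarith
    have hint := integral_mono (hM t).1 (hG1 t).1 hpt
    rw [(hM t).2, (hG1 t).2] at hint
    have := Real.exp_le_exp.mp hint
    ring_nf at this ⊢
    linarith
  have key4 : ∀ t : ℝ, 0 < t → t * μ₀ + v * t ^ 2 / 2 ≤ (v₂:ℝ) * t ^ 2 / 2 := by
    intro t ht
    have hpt : (fun ω => Real.exp (t * M ω)) ≤ fun ω => Real.exp (t * G₂ ω) := by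
      intro ω
      apply Real.exp_le_exp.mpr
      have hle : M ω ≤ G₂ ω := min_le_right _ _
      nlinarith
    have hint := integral_mono (hM t).1 (hG2 t).1 hpt
    rw [(hM t).2, (hG2 t).2] at hint
    have := Real.exp_le_exp.mp hint
    ring_nf at this ⊢
    linarith
  -- v = v₁ = v₂
  have hv1le : (v₁:ℝ) ≤ v := by
    have := aux_quad (a := ((v₁:ℝ) - v) / 2) (b := μ₀) (K := 0)
      (fun t ht => by have := key1 t ht; nlinarith)
    linarith
  have hv1ge : (v:ℝ) ≤ v₁ := by
    have := aux_quad (a := ((v:ℝ) - v₁) / 2) (b := μ₀) (K := 0)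
      (fun t ht => by have := key3 t ht; nlinarith)
    linarith
  have hv2le : (v₂:ℝ) ≤ v := by
    have := aux_quad (a := ((v₂:ℝ) - v) / 2) (b := μ₀) (K := 0)
      (fun t ht => by have := key2 t ht; nlinarith)
    linarith
  have hv2ge : (v:ℝ) ≤ v₂ := by
    have := aux_quad (a := ((v:ℝ) - v₂) / 2) (b := μ₀) (K := 0)
      (fun t ht => by have := key4 t ht; nlinarith)
    linarith
  have hveq1 : (v:ℝ) = v₁ := le_antisymm hv1ge hv1le
  have hveq2 : (v:ℝ) = v₂ := le_antisymm hv2ge hv2le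
  -- μ₀ ≤ 0
  have hμle : μ₀ ≤ 0 := by
    have := key3 1 one_pos
    rw [← hveq1] at this
    nlinarith
  -- μ₀ ≥ 0 via the sum bound
  have hμge : (0:ℝ) ≤ μ₀ := by
    have hlog : ∀ t : ℝ, 0 < t → -μ₀ * t ≤ Real.log 2 := by
      intro t ht
      have hpt : (fun ω => Real.exp (-t * M ω))
          ≤ fun ω => Real.exp (-t * G₁ ω) + Real.exp (-t * G₂ ω) := by
        intro ω
        dsimp only
        rcases min_choice (G₁ ω) (G₂ ω) with h | h
        · rw [show M ω = G₁ ω from h]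
          exact le_add_of_nonneg_right (Real.exp_pos _).le
        · rw [show M ω = G₂ ω from h]
          exact le_add_of_nonneg_left (Real.exp_pos _).le
      have hint := integral_mono (hM (-t)).1 ((hG1 (-t)).1.add (hG2 (-t)).1) hpt
      simp only [Pi.add_apply] at hint
      rw [integral_add (hG1 (-t)).1 (hG2 (-t)).1, (hM (-t)).2, (hG1 (-t)).2,
        (hG2 (-t)).2] at hint
      have h2 : Real.exp (-μ₀ * t) ≤ 2 := by
        have hc := Real.exp_pos ((v:ℝ) * t ^ 2 / 2)
        have hh : Real.exp (-μ₀ * t) * Real.exp ((v:ℝ) * t ^ 2 / 2)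
            ≤ 2 * Real.exp ((v:ℝ) * t ^ 2 / 2) := by
          rw [← Real.exp_add]
          calc Real.exp (-μ₀ * t + (v:ℝ) * t ^ 2 / 2)
              = Real.exp (-t * μ₀ + (v:ℝ) * (-t) ^ 2 / 2) := by ring_nf
            _ ≤ Real.exp (-t * 0 + (v₁:ℝ) * (-t) ^ 2 / 2)
                + Real.exp (-t * 0 + (v₂:ℝ) * (-t) ^ 2 / 2) := hint
            _ = 2 * Real.exp ((v:ℝ) * t ^ 2 / 2) := by
                rw [← hveq1, ← hveq2]; ring_nf
        exact le_of_mul_le_mul_right hh hc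
      have h3 : Real.exp (-μ₀ * t) ≤ Real.exp (Real.log 2) := by
        rwa [Real.exp_log (by norm_num : (0:ℝ) < 2)]
      exact Real.exp_le_exp.mp h3
    have := aux_le_zero (b := -μ₀) (K := Real.log 2) hlog
    linarith
  have hμ : μ₀ = 0 := le_antisymm hμle hμge
  -- equality at t = 1 forces M = G₁ a.e.
  have hzero : ∫ ω, (Real.exp (-1 * M ω) - Real.exp (-1 * G₁ ω)) ∂P = 0 := by
    rw [integral_sub (hM (-1)).1 (hG1 (-1)).1, (hM (-1)).2, (hG1 (-1)).2, hμ, ← hveq1]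
    ring_nf
  have hnn : 0 ≤ᵐ[P] fun ω => Real.exp (-1 * M ω) - Real.exp (-1 * G₁ ω) :=
    Filter.Eventually.of_forall fun ω => by
      simp only [Pi.zero_apply]
      have : M ω ≤ G₁ ω := min_le_left _ _
      have := Real.exp_le_exp.mpr (by linarith : -1 * G₁ ω ≤ -1 * M ω)
      linarith
  have hae := (integral_eq_zero_iff_of_nonneg_ae hnn
    ((hM (-1)).1.sub (hG1 (-1)).1)).mp hzero
  have haele : ∀ᵐ ω ∂P, G₁ ω ≤ G₂ ω := by
    filter_upwards [hae] with ω h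
    have h1 : Real.exp (-1 * M ω) = Real.exp (-1 * G₁ ω) := by
      have := sub_eq_zero.mp h
      exact this
    have h2 : M ω = G₁ ω := by
      have := Real.exp_eq_exp.mp h1
      linarith
    exact min_eq_left_iff.mp h2
  -- G₂ - G₁ is a nonnegative centered Gaussian, hence zero
  have hmD : Measurable fun ω => G₂ ω - G₁ ω := hm2.sub hm1
  have hD0 : P ((fun ω => G₂ ω - G₁ ω) ⁻¹' Set.Iio 0) = 0 := by
    have h' : ∀ᵐ ω ∂P, 0 ≤ G₂ ω - G₁ ω := by
      filter_upwards [haele] with ω h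
      linarith
    have := ae_iff.mp h'
    convert this using 2
    ext ω
    simp [not_le]
  have hmap0 : gaussianReal 0 σ (Set.Iio 0) = 0 := by
    rw [← hσmap, Measure.map_apply hmD measurableSet_Iio]
    exact hD0
  have hσ0 : σ = 0 := by
    by_contra hσ
    have := gaussianReal_absolutelyContinuous' 0 hσ hmap0
    rw [Real.volume_Iio] at this
    simp at this
  rw [hσ0, gaussianReal_zero_var] at hσmap
  have hs : MeasurableSet ({0}ᶜ : Set ℝ) := (measurableSet_singleton 0).compl
  have hmap := Measure.map_apply (μ := P) hmD hs
  rw [hσmap] at hmap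
  have hd : (Measure.dirac (0:ℝ)) ({0}ᶜ) = 0 := by
    rw [Measure.dirac_apply' _ hs]
    simp
  have hP0 : P ((fun ω => G₂ ω - G₁ ω) ⁻¹' ({0}ᶜ)) = 0 := by
    rw [← hmap, hd]
  have hset : {ω | G₁ ω ≠ G₂ ω} = (fun ω => G₂ ω - G₁ ω) ⁻¹' ({0}ᶜ) := by
    ext ω
    simp [sub_eq_zero, eq_comm]
  exact hne (by rw [hset]; exact hP0)
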